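/- arXiv:2410.22540 — 2 statements merged into one kernel-verified Lean document; each statement's English description precedes it below -/
import Mathlib

section
/- Let X and Y be countable sets, f : X → C(Y), and S ∈ C(X). Then the Kleisli extension f†(S) is up-closed: if μ ∈ f†(S) and μ ⊑_D ν, then ν ∈ f†(S). -/
open scoped Classical
open Filter Topology

namespace DOL

/-- A discrete probability distribution on `X`: pointwise nonnegative with total mass 1. -/
def IsDist {X : Type*} (μ : X → ℝ) : Prop := (∀ x, 0 ≤ μ x) ∧ HasSum μ 1

/-- The point-mass (Dirac) distribution at `x`. -/
noncomputable def dirac {X : Type*} (x : X) : X → ℝ := fun y => if y = x then 1 else 0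

/-- The order `⊑_D` on distributions over `X_⊥ = Option X` (with `⊥ = none`):
pointwise comparison at proper states only. -/
def dle {X : Type*} (μ ν : Option X → ℝ) : Prop := ∀ x : X, μ (some x) ≤ ν (some x)

/-- Up-closure of a set of distributions over `X_⊥` (within `D(X_⊥)`). -/
def upClo {X : Type*} (S : Set (Option X → ℝ)) : Set (Option X → ℝ) :=
  {ν | IsDist ν ∧ ∃ μ ∈ S, dle μ ν}

/-- Convexity of a set of functions, with pointwise convex combinations. -/
def IsConvexSet {X : Type*} (S : Set (X → ℝ)) : Prop :=
  ∀ μ ∈ S, ∀ ν ∈ S, ∀ p : ℝ, 0 ≤ p → p ≤ 1 →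
    (fun x => p * μ x + (1 - p) * ν x) ∈ S

/-- Membership in `C(X)`: nonempty, consisting of distributions over `X_⊥`,
convex, (topologically) closed, and up-closed. -/
def memC {X : Type*} (S : Set (Option X → ℝ)) : Prop :=
  S.Nonempty ∧ (∀ μ ∈ S, IsDist μ) ∧ IsConvexSet S ∧ IsClosed S ∧ upClo S = S

/-- Bottom-lifting of a set-valued map: `f_⊥(⊥) = ↑{δ_⊥}`. -/
noncomputable def fbot {X Y : Type*} (f : X → Set (Option Y → ℝ)) :
    Option X → Set (Option Y → ℝ) :=
  fun x => match x with
  | some x => f x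
  | none => upClo {dirac (none : Option Y)}

/-- Kleisli extension: all convex mixtures `∑_{x ∈ supp μ} μ(x)·ν_x` with `μ ∈ S`
and `ν_x ∈ f_⊥(x)` on the support of `μ`. -/
noncomputable def kleisli {X Y : Type*} (f : X → Set (Option Y → ℝ))
    (S : Set (Option X → ℝ)) : Set (Option Y → ℝ) :=
  {ξ | ∃ μ ∈ S, ∃ ν : Option X → (Option Y → ℝ),
    (∀ x, 0 < μ x → ν x ∈ fbot f x) ∧ (∀ y, ξ y = ∑' x, μ x * ν x y)}

/-- Probabilistic choice between sets of distributions. -/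
def pchoice {X : Type*} (p : ℝ) (S T : Set (Option X → ℝ)) : Set (Option X → ℝ) :=
  {ξ | ∃ μ ∈ S, ∃ ν ∈ T, ξ = fun x => p * μ x + (1 - p) * ν x}

/-- The monad unit `η(x) = ↑{δ_x}`. -/
noncomputable def eta {X : Type*} (x : X) : Set (Option X → ℝ) := upClo {dirac (some x)}

/-- The loop characteristic functional. -/
noncomputable def Phi {St : Type*} (c : St → Set (Option St → ℝ)) (b : St → Bool)
    (f : St → Set (Option St → ℝ)) : St → Set (Option St → ℝ) :=
  fun σ => if b σ then kleisli f (c σ) else upClo {dirac (some σ)}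



/-- Splitting a sum over `Option`: adding the `none` term. -/
lemma hasSum_option_of_some {Y : Type*} {f : Option Y → ℝ} {a : ℝ}
    (h : HasSum (fun y => f (some y)) a) : HasSum f (a + f none) := by
  classical
  have h1 : ∀ z ∉ Set.range (some : Y → Option Y),
      (if z = none then (0:ℝ) else f z) = 0 := by
    intro z hz
    cases z with
    | none => simp
    | some y => exact absurd ⟨y, rfl⟩ hz
  have h2 : HasSum ((fun z : Option Y => if z = none then (0:ℝ) else f z) ∘ some) a := by
    convert h using 1; funext y; simp
  have hg : HasSum (fun z : Option Y => if z = none then (0:ℝ) else f z) a :=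
    ((Option.some_injective Y).hasSum_iff h1).mp h2
  have hind : HasSum (fun z : Option Y => if z = none then f none else 0) (f none) :=
    hasSum_ite_eq none (f none)
  have := hg.add hind
  have heq : (fun z : Option Y =>
      (if z = none then (0:ℝ) else f z) + (if z = none then f none else 0)) = f := by
    funext z; cases z <;> simp
  rwa [heq] at this

/-- Dropping the `none` term from a sum over `Option`. -/
lemma hasSum_some_of_option {Y : Type*} {f : Option Y → ℝ} {a : ℝ}
    (h : HasSum f a) : HasSum (fun y => f (some y)) (a - f none) := by
  classical
  have hind : HasSum (fun z : Option Y => if z = none then f none else 0) (f none) :=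
    hasSum_ite_eq none (f none)
  have hg : HasSum (fun z : Option Y => f z - (if z = none then f none else 0))
      (a - f none) := h.sub hind
  have h1 : ∀ z ∉ Set.range (some : Y → Option Y),
      (f z - (if z = none then f none else 0)) = 0 := by
    intro z hz
    cases z with
    | none => simp
    | some y => exact absurd ⟨y, rfl⟩ hz
  have h2 := ((Option.some_injective Y).hasSum_iff h1).mpr hg
  have heq : ((fun z : Option Y => f z - if z = none then f none else 0) ∘ some)
      = fun y => f (some y) := by
    funext y; simp [Function.comp]
  rwa [heq] at h2

lemma isDist_le_one {Y : Type*} {μ : Y → ℝ} (h : IsDist μ) (z : Y) : μ z ≤ 1 :=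
  le_hasSum h.2 z (fun j _ => h.1 j)

lemma isDist_dirac {Y : Type*} (y : Y) : IsDist (dirac y) := by
  constructor
  · intro z; unfold dirac; split <;> norm_num
  · exact hasSum_ite_eq y 1

lemma mem_fbot_isDist {X Y : Type*} {f : X → Set (Option Y → ℝ)} (hf : ∀ x, memC (f x))
    {x : Option X} {τ : Option Y → ℝ} (h : τ ∈ fbot f x) : IsDist τ := by
  cases x with
  | some x => exact (hf x).2.1 τ h
  | none => exact h.1

lemma fbot_upClosed {X Y : Type*} {f : X → Set (Option Y → ℝ)} (hf : ∀ x, memC (f x))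
    {x : Option X} {τ τ' : Option Y → ℝ} (h : τ ∈ fbot f x) (h' : IsDist τ')
    (hle : dle τ τ') : τ' ∈ fbot f x := by
  cases x with
  | some x =>
    have hu := (hf x).2.2.2.2
    rw [show fbot f (some x) = f x from rfl, ← hu]
    exact ⟨h', τ, h, hle⟩
  | none =>
    refine ⟨h', dirac none, rfl, ?_⟩
    intro y
    simp only [dirac, if_neg (by simp : (some y : Option Y) ≠ none)]
    exact h'.1 _

/-- the Kleisli extension `f†(S)` is up-closed. -/
theorem kleisli_upClosed {X Y : Type*} [Countable X] [Countable Y]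
    (f : X → Set (Option Y → ℝ)) (hf : ∀ x, memC (f x))
    (S : Set (Option X → ℝ)) (hS : memC S) :
    ∀ μ ∈ kleisli f S, ∀ ν : Option Y → ℝ, IsDist ν → dle μ ν → ν ∈ kleisli f S := by
  intro ξ hξ ρ hρ hle
  obtain ⟨μ, hμS, ν, hν, hξeq⟩ := hξ
  have hμd : IsDist μ := hS.2.1 μ hμS
  classical
  -- normalize the family ν so that every member is a distribution
  set ν0 : Option X → Option Y → ℝ := fun x => if 0 < μ x then ν x else dirac none with hν0def
  have hν0mem : ∀ x, 0 < μ x → ν0 x ∈ fbot f x := by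
    intro x hx; simp only [hν0def, if_pos hx]; exact hν x hx
  have hν0dist : ∀ x, IsDist (ν0 x) := by
    intro x
    by_cases hx : 0 < μ x
    · simp only [hν0def, if_pos hx]
      exact mem_fbot_isDist hf (hν x hx)
    · simp only [hν0def, if_neg hx]
      exact isDist_dirac none
  have hμ0 : ∀ x, ¬ 0 < μ x → μ x = 0 := fun x hx => le_antisymm (not_lt.mp hx) (hμd.1 x)
  set F : Option X → Option Y → ℝ := fun x z => μ x * ν0 x z with hFdef
  have hξF : ∀ z, ξ z = ∑' x, F x z := by
    intro z
    rw [hξeq z]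
    refine tsum_congr fun x => ?_
    by_cases hx : 0 < μ x
    · simp [hFdef, hν0def, if_pos hx]
    · simp [hFdef, hμ0 x hx]
  have hFnonneg : ∀ x z, 0 ≤ F x z := fun x z => mul_nonneg (hμd.1 x) ((hν0dist x).1 z)
  have hFle : ∀ x z, F x z ≤ μ x := fun x z =>
    mul_le_of_le_one_right (hμd.1 x) (isDist_le_one (hν0dist x) z)
  have hSumF : ∀ z, Summable (fun x => F x z) := fun z =>
    hμd.2.summable.of_nonneg_of_le (fun x => hFnonneg x z) (fun x => hFle x z)
  set c : ℝ := ξ none with hcdef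
  have hcF : c = ∑' x, F x none := hξF none
  have hc0 : 0 ≤ c := by rw [hcF]; exact tsum_nonneg fun x => hFnonneg x none
  -- row sums: for each x, HasSum over y
  have hrow : ∀ x, HasSum (fun y => F x (some y)) (μ x - F x none) := by
    intro x
    have := hasSum_some_of_option (hν0dist x).2
    have h2 := this.mul_left (μ x)
    have : μ x * (1 - ν0 x none) = μ x - F x none := by simp [hFdef]; ring
    rw [this] at h2
    exact h2
  have hrowSummable : Summable (fun x => μ x - F x none) :=
    hμd.2.summable.sub (hSumF none)
  -- summability on the product
  have hG : Summable (fun p : Option X × Y => F p.1 (some p.2)) := by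
    rw [summable_prod_of_nonneg (fun p => hFnonneg p.1 (some p.2))]
    refine ⟨fun x => (hrow x).summable, ?_⟩
    have heq : (fun x => ∑' y, F x (some y)) = fun x => μ x - F x none := by
      funext x; exact (hrow x).tsum_eq
    rw [heq]; exact hrowSummable
  have hswap : ∑' (y : Y) (x : Option X), F x (some y)
      = ∑' (x : Option X) (y : Y), F x (some y) := by
    refine Summable.tsum_comm' hG (fun x => (hrow x).summable) (fun y => hSumF (some y))
  have hcolSummable : Summable (fun y => ξ (some y)) := by
    have hG' : Summable (fun p : Y × Option X => F p.2 (some p.1)) := hG.prod_symm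
    rw [summable_prod_of_nonneg (fun p => hFnonneg p.2 (some p.1))] at hG'
    have := hG'.2
    have heq : (fun y => ∑' x, F x (some y)) = fun y => ξ (some y) := by
      funext y; exact (hξF (some y)).symm
    rwa [heq] at this
  have htsum_col : ∑' y, ξ (some y) = 1 - c := by
    have h1 : ∑' y, ξ (some y) = ∑' (y : Y) (x : Option X), F x (some y) := by
      refine tsum_congr fun y => hξF (some y)
    rw [h1, hswap]
    have h2 : ∀ x, ∑' y, F x (some y) = μ x - F x none := fun x => (hrow x).tsum_eq
    rw [tsum_congr h2, hrowSummable.hasSum.tsum_eq,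
      Summable.tsum_sub hμd.2.summable (hSumF none), hμd.2.tsum_eq, hcF]
  have hξsome : HasSum (fun y => ξ (some y)) (1 - c) :=
    hcolSummable.hasSum_iff.mpr htsum_col
  -- the excess
  set e : Y → ℝ := fun y => ρ (some y) - ξ (some y) with hedef
  have he0 : ∀ y, 0 ≤ e y := fun y => sub_nonneg.mpr (hle y)
  have hρsome : HasSum (fun y => ρ (some y)) (1 - ρ none) := hasSum_some_of_option hρ.2
  have hesum : HasSum e (c - ρ none) := by
    have := hρsome.sub hξsome
    have heq : (1 - ρ none) - (1 - c) = c - ρ none := by ring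
    rwa [heq] at this
  by_cases hc : 0 < c
  · -- main case
    have hcne : c ≠ 0 := ne_of_gt hc
    set d : Option Y → ℝ := fun z => match z with
      | none => ρ none / c - 1
      | some y => e y / c with hddef
    have hdsome : HasSum (fun y => d (some y)) ((c - ρ none) / c) := by
      have := hesum.div_const c
      simpa [hddef] using this
    have hd : HasSum d 0 := by
      have := hasSum_option_of_some hdsome
      have heq : (c - ρ none) / c + d none = 0 := by
        simp only [hddef]; field_simp; ring
      rwa [heq] at this
    set ν' : Option X → Option Y → ℝ := fun x z => ν0 x z + ν0 x none * d z with hν'def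
    have hν'dist : ∀ x, IsDist (ν' x) := by
      intro x
      constructor
      · intro z
        cases z with
        | some y =>
          have : ν' x (some y) = ν0 x (some y) + ν0 x none * (e y / c) := rfl
          rw [this]
          have h1 := (hν0dist x).1 (some y)
          have h2 := (hν0dist x).1 none
          have h3 : 0 ≤ e y / c := div_nonneg (he0 y) hc0
          nlinarith
        | none =>
          have : ν' x none = ν0 x none * (ρ none / c) := by
            simp only [hν'def, hddef]; ring
          rw [this]
          have h1 := (hν0dist x).1 none
          have h2 : 0 ≤ ρ none / c := div_nonneg (hρ.1 none) hc0
          nlinarith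
      · have := (hν0dist x).2.add (hd.mul_left (ν0 x none))
        simpa using this
    have hν'le : ∀ x, dle (ν0 x) (ν' x) := by
      intro x y
      have : ν' x (some y) = ν0 x (some y) + ν0 x none * (e y / c) := rfl
      rw [this]
      have h1 := (hν0dist x).1 none
      have h2 : 0 ≤ e y / c := div_nonneg (he0 y) hc0
      nlinarith
    have hν'mem : ∀ x, 0 < μ x → ν' x ∈ fbot f x := fun x hx =>
      fbot_upClosed hf (hν0mem x hx) (hν'dist x) (hν'le x)
    refine ⟨μ, hμS, ν', hν'mem, ?_⟩
    intro z
    have hterm : ∀ x, μ x * ν' x z = F x z + F x none * d z := by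
      intro x; simp only [hν'def, hFdef]; ring
    have hsum2 : Summable (fun x => F x none * d z) := (hSumF none).mul_right (d z)
    calc ρ z = ξ z + c * d z := by
            cases z with
            | some y =>
              have : d (some y) = e y / c := rfl
              rw [this]
              field_simp [hedef]
              simp only [hedef]; ring
            | none =>
              have : d none = ρ none / c - 1 := rfl
              rw [this, hcdef]
              field_simp
              rw [← hcdef, show (1:ℝ) + (ρ none / c - 1) = ρ none / c by ring, mul_div_assoc',
                mul_div_cancel_left₀ _ hcne]
      _ = ∑' x, (F x z + F x none * d z) := by
            rw [Summable.tsum_add (hSumF z) hsum2, tsum_mul_right, ← hcF, hξF z]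
      _ = ∑' x, μ x * ν' x z := tsum_congr fun x => (hterm x).symm
  · -- degenerate case : c = 0, hence ρ = ξ
    have hceq : c = 0 := le_antisymm (not_lt.mp hc) hc0
    have hρnone : ρ none = 0 := by
      have h1 : 0 ≤ c - ρ none := hesum.tsum_eq ▸ tsum_nonneg he0
      have h2 := hρ.1 none
      linarith [h1, hceq ▸ h1]
    have hez : e = 0 := by
      have : HasSum e 0 := by
        have heq : c - ρ none = 0 := by rw [hceq, hρnone]; ring
        rwa [heq] at hesum
      exact (hasSum_zero_iff_of_nonneg he0).mp this
    have hρξ : ∀ z, ρ z = ξ z := by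
      intro z
      cases z with
      | some y =>
        have := congrFun hez y
        simp only [hedef, Pi.zero_apply] at this
        linarith
      | none => rw [hρnone, ← hcdef, hceq]
    exact ⟨μ, hμS, ν, hν, fun z => (hρξ z).trans (hξeq z)⟩

end DOL
end

section
/- (Scott continuity of Kleisli extension in its function argument.) Let X and Y be countable sets and let F be a nonempty family of functions X → C(Y) that is directed with respect to the order f ⊑ g iff g(x) ⊆ f(x) for all x ∈ X. Let G : X → set of distributions be the pointwise intersection G(x) := ∩_{f∈F} f(x). Then for every S ∈ C(X), G†(S) = ∩_{f∈F} f†(S), where the Kleisli extension formula is applied to G pointwise (with G_⊥(⊥) := ↑{δ_⊥}). -/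
open scoped Classical
open Filter Topology

namespace DOL

/-! ### Auxiliary lemmas -/

section Aux

variable {X Y Z : Type*}

lemma IsDist.summable' {μ : Z → ℝ} (h : IsDist μ) : Summable μ := h.2.summable

lemma IsDist.le_one' {μ : Z → ℝ} (h : IsDist μ) (z : Z) : μ z ≤ 1 :=
  le_hasSum h.2 z fun j _ => h.1 j

lemma IsDist.sum_le_one {μ : Z → ℝ} (h : IsDist μ) (s : Finset Z) : ∑ z ∈ s, μ z ≤ 1 :=
  sum_le_hasSum s (fun i _ => h.1 i) h.2

lemma isDist_dirac_s9 (z : Z) : IsDist (dirac z) := by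
  constructor
  · intro y; unfold dirac; split <;> norm_num
  · convert hasSum_ite_eq z (1 : ℝ) using 1; funext y; unfold dirac; congr

lemma mem_upClo_dirac_none {ν : Option Y → ℝ} :
    ν ∈ upClo {dirac (none : Option Y)} ↔ IsDist ν := by
  constructor
  · exact fun h => h.1
  · intro h
    refine ⟨h, dirac none, rfl, fun y => ?_⟩
    have : dirac (none : Option Y) (some y) = 0 := by simp [dirac]
    rw [this]; exact h.1 _

lemma fbot_isDist {f : X → Set (Option Y → ℝ)} (hf : ∀ x, memC (f x))
    {o : Option X} {ν : Option Y → ℝ} (h : ν ∈ fbot f o) : IsDist ν := by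
  cases o with
  | none => exact h.1
  | some x => exact (hf x).2.1 _ h

lemma hasSum_option {f : Option Z → ℝ} {a : ℝ}
    (h : HasSum (fun z : Z => f (some z)) a) : HasSum f (a + f none) := by
  have h1 : HasSum (fun o : Option Z => if o = none then f none else 0) (f none) :=
    hasSum_ite_eq (none : Option Z) (f none)
  have h2 : HasSum (fun o : Option Z => if o = none then 0 else f o) a := by
    refine ((Option.some_injective Z).hasSum_iff ?_).mp ?_
    · intro o ho
      have : o = none := by
        cases o with
        | none => rfl
        | some z => exact absurd ⟨z, rfl⟩ ho
      simp [this]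
    · refine h.congr_fun fun z => ?_
      simp
  have := h2.add h1
  refine this.congr_fun fun o => ?_
  cases o <;> simp

lemma mix_summable_uncurry {A B : Type*} {μ : A → ℝ} {ν : A → B → ℝ}
    (hμ0 : ∀ a, 0 ≤ μ a) (hb : ∀ s : Finset A, ∑ a ∈ s, μ a ≤ 1)
    (hν : ∀ a, IsDist (ν a)) :
    Summable (fun p : A × B => μ p.1 * ν p.1 p.2) := by
  apply summable_of_sum_le (c := 1)
  · intro p; exact mul_nonneg (hμ0 _) ((hν _).1 _)
  · intro u
    calc ∑ p ∈ u, μ p.1 * ν p.1 p.2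
        ≤ ∑ p ∈ (u.image Prod.fst) ×ˢ (u.image Prod.snd), μ p.1 * ν p.1 p.2 := by
          apply Finset.sum_le_sum_of_subset_of_nonneg
          · intro p hp
            rw [Finset.mem_product]
            exact ⟨Finset.mem_image_of_mem _ hp, Finset.mem_image_of_mem _ hp⟩
          · intro p _ _; exact mul_nonneg (hμ0 _) ((hν _).1 _)
      _ = ∑ a ∈ u.image Prod.fst, ∑ b ∈ u.image Prod.snd, μ a * ν a b :=
          Finset.sum_product _ _ _
      _ ≤ ∑ a ∈ u.image Prod.fst, μ a * 1 := by
          apply Finset.sum_le_sum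
          intro a _
          rw [← Finset.mul_sum]
          exact mul_le_mul_of_nonneg_left ((hν a).sum_le_one _) (hμ0 a)
      _ ≤ 1 := by
          simpa using hb (u.image Prod.fst)

/-- Normal form for membership in a Kleisli extension: the mixture can be taken with
witnesses defined (and in `f x`) at *every* state, and `ξ` is a distribution. -/
lemma kleisli_extract {f : X → Set (Option Y → ℝ)}
    (hf : ∀ x, memC (f x)) {S : Set (Option X → ℝ)} (hS : memC S)
    {ξ : Option Y → ℝ} (h : ξ ∈ kleisli f S) :
    IsDist ξ ∧ ∃ μ ∈ S, ∃ ν : X → Option Y → ℝ,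
      (∀ x, ν x ∈ f x) ∧
      ∀ y : Option Y, ∀ s : Finset X, ∑ x ∈ s, μ (some x) * ν x y ≤ ξ y := by
  obtain ⟨μ, hμS, ν₀, hν₀, hξeq⟩ := h
  have hμ : IsDist μ := hS.2.1 μ hμS
  classical
  -- replace the witnesses off the support of `μ`
  let ν₁ : Option X → Option Y → ℝ := fun o =>
    if h0 : 0 < μ o then ν₀ o else o.elim (dirac none) (fun x => (hf x).1.some)
  have hν₁mem : ∀ x : X, ν₁ (some x) ∈ f x := by
    intro x
    by_cases h0 : 0 < μ (some x)
    · simpa [ν₁, h0, fbot] using hν₀ (some x) h0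
    · simpa [ν₁, h0] using (hf x).1.some_mem
  have hν₁dist : ∀ o, IsDist (ν₁ o) := by
    intro o
    by_cases h0 : 0 < μ o
    · simpa [ν₁, h0] using fbot_isDist hf (hν₀ o h0)
    · cases o with
      | none => simpa [ν₁, h0] using isDist_dirac_s9 (none : Option Y)
      | some x => exact (hf x).2.1 _ (by simpa [ν₁, h0] using (hf x).1.some_mem)
  have hprod : ∀ o y, μ o * ν₀ o y = μ o * ν₁ o y := by
    intro o y
    by_cases h0 : 0 < μ o
    · simp [ν₁, h0]
    · have : μ o = 0 := le_antisymm (not_lt.mp h0) (hμ.1 o)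
      simp [this]
  have hξeq' : ∀ y, ξ y = ∑' o : Option X, μ o * ν₁ o y := by
    intro y
    rw [hξeq y]
    exact tsum_congr fun o => hprod o y
  have hunc : Summable (fun p : Option X × Option Y => μ p.1 * ν₁ p.1 p.2) :=
    mix_summable_uncurry hμ.1 hμ.sum_le_one hν₁dist
  have hfib : ∀ y, Summable (fun o : Option X => μ o * ν₁ o y) := by
    intro y
    refine Summable.of_nonneg_of_le
      (fun o => mul_nonneg (hμ.1 o) ((hν₁dist o).1 y))
      (fun o => ?_) hμ.summable'
    calc μ o * ν₁ o y ≤ μ o * 1 :=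
          mul_le_mul_of_nonneg_left ((hν₁dist o).le_one' y) (hμ.1 o)
      _ = μ o := mul_one _
  have hcol : ∀ o : Option X, Summable (fun y : Option Y => μ o * ν₁ o y) := by
    intro o; exact (hν₁dist o).summable'.mul_left _
  have hmarg : Summable (fun y : Option Y => ∑' o : Option X, μ o * ν₁ o y) := by
    have hsw : Summable (fun q : Option Y × Option X => μ q.2 * ν₁ q.2 q.1) := by
      have := hunc.prod_symm
      simpa [Prod.swap] using this
    exact ((summable_prod_of_nonneg
      (fun q => mul_nonneg (hμ.1 _) ((hν₁dist _).1 _))).mp hsw).2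
  have hξsum : Summable ξ := hmarg.congr fun y => (hξeq' y).symm
  have htot : ∑' y : Option Y, ξ y = 1 := by
    calc ∑' y : Option Y, ξ y
        = ∑' (y : Option Y) (o : Option X), μ o * ν₁ o y := tsum_congr hξeq'
      _ = ∑' (o : Option X) (y : Option Y), μ o * ν₁ o y := Summable.tsum_comm' hunc hcol hfib
      _ = ∑' o : Option X, μ o := by
          refine tsum_congr fun o => ?_
          rw [tsum_mul_left, (hν₁dist o).2.tsum_eq, mul_one]
      _ = 1 := hμ.2.tsum_eq
  have hξdist : IsDist ξ := by
    constructor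
    · intro y
      rw [hξeq' y]
      exact tsum_nonneg fun o => mul_nonneg (hμ.1 o) ((hν₁dist o).1 y)
    · exact htot ▸ hξsum.hasSum
  refine ⟨hξdist, μ, hμS, fun x => ν₁ (some x), hν₁mem, ?_⟩
  intro y s
  have himg : ∑ x ∈ s, μ (some x) * ν₁ (some x) y
      = ∑ o ∈ s.image some, μ o * ν₁ o y := by
    rw [Finset.sum_image (fun a _ b _ hab => Option.some_injective X hab)]
  rw [hξeq' y, himg]
  exact Summable.sum_le_tsum _ (fun o _ => mul_nonneg (hμ.1 o) ((hν₁dist o).1 y)) (hfib y)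

end Aux

/-- Scott continuity of Kleisli extension in its function argument:
for a directed family `F` (w.r.t. pointwise reverse inclusion), the Kleisli extension
of the pointwise intersection is the intersection of the Kleisli extensions. -/
theorem kleisli_scott_continuous {X Y : Type*} [Countable X] [Countable Y]
    (F : Set (X → Set (Option Y → ℝ))) (hne : F.Nonempty)
    (hmem : ∀ f ∈ F, ∀ x, memC (f x))
    (hdir : ∀ f ∈ F, ∀ g ∈ F, ∃ h ∈ F, (∀ x, h x ⊆ f x) ∧ (∀ x, h x ⊆ g x))
    (S : Set (Option X → ℝ)) (hS : memC S) :
    kleisli (fun x : X => ⋂ f ∈ F, f x) S = ⋂ f ∈ F, kleisli f S := by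
  classical
  obtain ⟨f₀, hf₀⟩ := hne
  apply Set.Subset.antisymm
  · -- easy direction: the same witness works for every `f ∈ F`
    intro ξ hξ
    obtain ⟨μ, hμS, ν, hν, hξeq⟩ := hξ
    refine Set.mem_iInter₂.mpr fun f hf => ⟨μ, hμS, ν, ?_, hξeq⟩
    intro o ho
    have h := hν o ho
    cases o with
    | none => exact h
    | some x =>
      have h' : ν (some x) ∈ ⋂ g ∈ F, g x := h
      exact Set.mem_iInter₂.mp h' f hf
  · -- hard direction: a compactness argument
    intro ξ hξ
    have hξf : ∀ f ∈ F, ξ ∈ kleisli f S := fun f hf => Set.mem_iInter₂.mp hξ f hf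
    have hξdist : IsDist ξ := (kleisli_extract (hmem f₀ hf₀) hS (hξf f₀ hf₀)).1
    -- the compact ambient cube
    let T : Set ((Option X → ℝ) × (X → Option Y → ℝ)) :=
      (Set.univ.pi fun _ : Option X => Set.Icc (0:ℝ) 1) ×ˢ
      (Set.univ.pi fun _ : X => Set.univ.pi fun _ : Option Y => Set.Icc (0:ℝ) 1)
    have hTc : IsCompact T :=
      (isCompact_univ_pi fun _ => isCompact_Icc).prod
        (isCompact_univ_pi fun _ => isCompact_univ_pi fun _ => isCompact_Icc)
    have hTcl : IsClosed T :=
      (isClosed_set_pi fun _ _ => isClosed_Icc).prod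
        (isClosed_set_pi fun _ _ => isClosed_set_pi fun _ _ => isClosed_Icc)
    -- the constraint sets
    let K : (X → Set (Option Y → ℝ)) → Set ((Option X → ℝ) × (X → Option Y → ℝ)) :=
      fun f => T ∩ {p | p.1 ∈ S} ∩ {p | ∀ x, p.2 x ∈ f x} ∩
        {p | ∀ y : Option Y, ∀ s : Finset X, ∑ x ∈ s, p.1 (some x) * p.2 x y ≤ ξ y}
    have hKcl : ∀ f ∈ F, IsClosed (K f) := by
      intro f hf
      refine IsClosed.inter (IsClosed.inter (IsClosed.inter hTcl ?_) ?_) ?_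
      · exact hS.2.2.2.1.preimage continuous_fst
      · have : {p : (Option X → ℝ) × (X → Option Y → ℝ) | ∀ x, p.2 x ∈ f x}
            = ⋂ x, (fun p : (Option X → ℝ) × (X → Option Y → ℝ) => p.2 x) ⁻¹' (f x) := by
          ext p; simp
        rw [this]
        exact isClosed_iInter fun x =>
          ((hmem f hf x).2.2.2.1).preimage ((continuous_apply x).comp continuous_snd)
      · have : {p : (Option X → ℝ) × (X → Option Y → ℝ) |
            ∀ y : Option Y, ∀ s : Finset X, ∑ x ∈ s, p.1 (some x) * p.2 x y ≤ ξ y}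
            = ⋂ (y : Option Y) (s : Finset X),
              {p : (Option X → ℝ) × (X → Option Y → ℝ) |
                ∑ x ∈ s, p.1 (some x) * p.2 x y ≤ ξ y} := by
          ext p; simp
        rw [this]
        refine isClosed_iInter fun y => isClosed_iInter fun s => ?_
        have hcont : Continuous (fun p : (Option X → ℝ) × (X → Option Y → ℝ) =>
            ∑ x ∈ s, p.1 (some x) * p.2 x y) := by
          apply continuous_finset_sum
          intro x _
          exact ((continuous_apply (some x)).comp continuous_fst).mul
            ((continuous_apply y).comp ((continuous_apply x).comp continuous_snd))
        exact isClosed_le hcont continuous_const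
    have hKT : ∀ f, K f ⊆ T := fun f => fun p hp => hp.1.1.1
    have hKne : ∀ f ∈ F, (K f).Nonempty := by
      intro f hf
      obtain ⟨-, μ, hμS, ν, hνf, hle⟩ := kleisli_extract (hmem f hf) hS (hξf f hf)
      have hμ : IsDist μ := hS.2.1 μ hμS
      refine ⟨(μ, ν), ⟨⟨⟨?_, hμS⟩, hνf⟩, hle⟩⟩
      constructor
      · intro o _; exact ⟨hμ.1 o, hμ.le_one' o⟩
      · intro x _
        intro y _
        have := (hmem f hf x).2.1 _ (hνf x)
        exact ⟨this.1 y, this.le_one' y⟩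
    have hKmono : ∀ f g : X → Set (Option Y → ℝ), (∀ x, f x ⊆ g x) → K f ⊆ K g := by
      intro f g hfg p hp
      exact ⟨⟨hp.1.1, fun x => hfg x (hp.1.2 x)⟩, hp.2⟩
    haveI : Nonempty F := ⟨⟨f₀, hf₀⟩⟩
    have hdirected : Directed (· ⊇ ·) (fun f : F => K f.1) := by
      rintro ⟨f, hf⟩ ⟨g, hg⟩
      obtain ⟨h, hh, hhf, hhg⟩ := hdir f hf g hg
      exact ⟨⟨h, hh⟩, hKmono h f hhf, hKmono h g hhg⟩
    obtain ⟨p, hp⟩ :=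
      IsCompact.nonempty_iInter_of_directed_nonempty_isCompact_isClosed
        (fun f : F => K f.1) hdirected (fun f => hKne f.1 f.2)
        (fun f => hTc.of_isClosed_subset (hKcl f.1 f.2) (hKT f.1))
        (fun f => hKcl f.1 f.2)
    -- unpack the common point
    have hpK : ∀ f ∈ F, p ∈ K f := fun f hf => Set.mem_iInter.mp hp ⟨f, hf⟩
    have hpS : p.1 ∈ S := (hpK f₀ hf₀).1.1.2
    have hμ : IsDist p.1 := hS.2.1 _ hpS
    have hpν : ∀ x : X, p.2 x ∈ ⋂ f ∈ F, f x :=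
      fun x => Set.mem_iInter₂.mpr fun f hf => (hpK f hf).1.2 x
    have hνd : ∀ x : X, IsDist (p.2 x) :=
      fun x => (hmem f₀ hf₀ x).2.1 _ ((hpK f₀ hf₀).1.2 x)
    have hple : ∀ y : Option Y, ∀ s : Finset X,
        ∑ x ∈ s, p.1 (some x) * p.2 x y ≤ ξ y := (hpK f₀ hf₀).2
    -- summability bookkeeping
    have hbX : ∀ s : Finset X, ∑ x ∈ s, p.1 (some x) ≤ 1 := by
      intro s
      calc ∑ x ∈ s, p.1 (some x) = ∑ o ∈ s.image some, p.1 o := by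
            rw [Finset.sum_image (fun a _ b _ hab => Option.some_injective X hab)]
        _ ≤ 1 := hμ.sum_le_one _
    have hunc : Summable (fun q : X × Option Y => p.1 (some q.1) * p.2 q.1 q.2) :=
      mix_summable_uncurry (fun x => hμ.1 _) hbX hνd
    have hμsome_summable : Summable (fun x : X => p.1 (some x)) :=
      hμ.summable'.comp_injective (Option.some_injective X)
    have hfib : ∀ y, Summable (fun x : X => p.1 (some x) * p.2 x y) := by
      intro y
      refine Summable.of_nonneg_of_le
        (fun x => mul_nonneg (hμ.1 _) ((hνd x).1 y)) (fun x => ?_) hμsome_summable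
      calc p.1 (some x) * p.2 x y ≤ p.1 (some x) * 1 :=
            mul_le_mul_of_nonneg_left ((hνd x).le_one' y) (hμ.1 _)
        _ = p.1 (some x) := mul_one _
    set Tt : Option Y → ℝ := fun y => ∑' x : X, p.1 (some x) * p.2 x y with hTt
    have hTsum : Summable Tt := by
      have hsw : Summable (fun q : Option Y × X => p.1 (some q.2) * p.2 q.2 q.1) := by
        have := hunc.prod_symm
        simpa [Prod.swap] using this
      exact ((summable_prod_of_nonneg
        (fun q => mul_nonneg (hμ.1 _) ((hνd _).1 _))).mp hsw).2
    have hTle : ∀ y, Tt y ≤ ξ y := fun y => Summable.tsum_le_of_sum_le (hfib y) (hple y)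
    have hμsome : ∑' x : X, p.1 (some x) = 1 - p.1 none := by
      have h1 : HasSum p.1 ((∑' x : X, p.1 (some x)) + p.1 none) :=
        hasSum_option hμsome_summable.hasSum
      have h2 := h1.unique hμ.2
      linarith
    have hcol : ∀ x : X, Summable (fun y : Option Y => p.1 (some x) * p.2 x y) :=
      fun x => (hνd x).summable'.mul_left _
    have hTtot : ∑' y : Option Y, Tt y = 1 - p.1 none := by
      calc ∑' y : Option Y, Tt y
          = ∑' (x : X) (y : Option Y), p.1 (some x) * p.2 x y :=
            Summable.tsum_comm' hunc hcol hfib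
        _ = ∑' x : X, p.1 (some x) := by
            refine tsum_congr fun x => ?_
            rw [tsum_mul_left, (hνd x).2.tsum_eq, mul_one]
        _ = 1 - p.1 none := hμsome
    -- the residual mass
    set r : Option Y → ℝ := fun y => ξ y - Tt y with hr
    have hr0 : ∀ y, 0 ≤ r y := fun y => sub_nonneg.mpr (hTle y)
    have hrs : Summable r := hξdist.summable'.sub hTsum
    have hrt : ∑' y, r y = p.1 none := by
      rw [hr]
      rw [Summable.tsum_sub hξdist.summable' hTsum, hξdist.2.tsum_eq, hTtot]
      ring
    -- the witness at `⊥`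
    set ρ : Option Y → ℝ :=
      (if p.1 none = 0 then dirac (none : Option Y) else fun y => r y / p.1 none) with hρ
    have hclaim1 : ∀ y, p.1 none * ρ y = r y := by
      intro y
      by_cases hc : p.1 none = 0
      · have hry : r y = 0 := by
          have h1 : r y ≤ ∑' y', r y' := Summable.le_tsum hrs y fun j _ => hr0 j
          rw [hrt, hc] at h1
          exact le_antisymm h1 (hr0 y)
        simp [hρ, hc, hry]
      · simp only [hρ, if_neg hc]
        field_simp
    have hclaim2 : 0 < p.1 none → ρ ∈ upClo {dirac (none : Option Y)} := by
      intro hpos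
      have hc : p.1 none ≠ 0 := ne_of_gt hpos
      rw [mem_upClo_dirac_none]
      constructor
      · intro y
        simp only [hρ, if_neg hc]
        exact div_nonneg (hr0 y) hpos.le
      · have h1 : HasSum r (p.1 none) := hrt ▸ hrs.hasSum
        have h2 : HasSum (fun y => r y / p.1 none) (p.1 none / p.1 none) :=
          h1.div_const _
        rw [div_self hc] at h2
        simpa only [hρ, if_neg hc] using h2
    -- assemble the witness for the intersection map
    refine ⟨p.1, hpS, fun o => o.elim ρ (fun x => p.2 x), ?_, ?_⟩
    · intro o ho
      cases o with
      | none => exact hclaim2 ho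
      | some x => exact hpν x
    · intro y
      have hsome : Summable (fun x : X =>
          p.1 (some x) * (Option.elim (some x) ρ (fun x' => p.2 x')) y) := hfib y
      have h1 : HasSum (fun o : Option X => p.1 o * (o.elim ρ (fun x => p.2 x)) y)
          (Tt y + p.1 none * ρ y) := by
        have := hasSum_option (f := fun o : Option X =>
          p.1 o * (o.elim ρ (fun x => p.2 x)) y) (hfib y).hasSum
        simpa using this
      rw [h1.tsum_eq]
      have h2 := hclaim1 y
      have h3 : r y = ξ y - Tt y := rfl
      linarith

end DOL
end
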